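/- For every n ≥ 0, the sum over all Fibonacci words w of weight n of dim(w)^2 equals n!. -/
import Mathlib


/-- `fdim` is the number of saturated chains from `∅` to a Fibonacci word
in the Young–Fibonacci lattice: `dim ∅ = 1`, `dim (1v) = dim v`,
`dim (2v) = (|v|+1) ⬝ dim v`. -/
def fdim : List ℕ → ℕ
  | [] => 1
  | a :: v => if a = 2 then (v.sum + 1) * fdim v else fdim v

def fibWords : ℕ → Finset (List ℕ)
  | 0 => {[]}
  | 1 => {[1]}
  | (n+2) => ((fibWords (n+1)).image (1 :: ·)) ∪ ((fibWords n).image (2 :: ·))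

lemma mem_fibWords : ∀ n : ℕ, ∀ w : List ℕ,
    w ∈ fibWords n ↔ ((∀ a ∈ w, a = 1 ∨ a = 2) ∧ w.sum = n) := by
  intro n
  induction n using Nat.strong_induction_on with
  | _ n ih =>
    match n with
    | 0 =>
      intro w
      constructor
      · intro hw
        simp [fibWords] at hw
        subst hw; simp
      · rintro ⟨h1, h2⟩
        cases w with
        | nil => simp [fibWords]
        | cons a t =>
          have := h1 a (by simp)
          simp at h2
          omega
    | 1 =>
      intro w
      constructor
      · intro hw
        simp [fibWords] at hw
        subst hw; simp
      · rintro ⟨h1, h2⟩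
        cases w with
        | nil => simp at h2
        | cons a t =>
          have ha := h1 a (by simp)
          simp at h2
          have ht : t = [] := by
            cases t with
            | nil => rfl
            | cons b s =>
              have hb := h1 b (by simp)
              simp at h2
              omega
          subst ht
          simp at h2
          simp [fibWords]
          omega
    | (m+2) =>
      intro w
      have ih1 := ih (m+1) (by omega)
      have ih0 := ih m (by omega)
      constructor
      · intro hw
        simp [fibWords] at hw
        rcases hw with ⟨u, hu, rfl⟩ | ⟨u, hu, rfl⟩
        · obtain ⟨h1, h2⟩ := (ih1 u).mp hu
          refine ⟨?_, by simp [h2]; omega⟩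
          intro a ha
          rw [List.mem_cons] at ha
          rcases ha with rfl | ha
          · left; rfl
          · exact h1 a ha
        · obtain ⟨h1, h2⟩ := (ih0 u).mp hu
          refine ⟨?_, by simp [h2]; omega⟩
          intro a ha
          rw [List.mem_cons] at ha
          rcases ha with rfl | ha
          · right; rfl
          · exact h1 a ha
      · rintro ⟨h1, h2⟩
        cases w with
        | nil => simp at h2
        | cons a t =>
          have ha := h1 a (by simp)
          simp at h2
          simp only [fibWords, Finset.mem_union, Finset.mem_image]
          rcases ha with rfl | rfl
          · exact Or.inl ⟨t, (ih1 t).mpr ⟨fun b hb => h1 b (by simp [hb]), by omega⟩, rfl⟩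
          · exact Or.inr ⟨t, (ih0 t).mpr ⟨fun b hb => h1 b (by simp [hb]), by omega⟩, rfl⟩

lemma sum_fibWords : ∀ n : ℕ, ∑ w ∈ fibWords n, (fdim w) ^ 2 = Nat.factorial n := by
  intro n
  induction n using Nat.strong_induction_on with
  | _ n ih =>
    match n with
    | 0 => simp [fibWords, fdim]
    | 1 => simp [fibWords, fdim, Nat.factorial]
    | (m+2) =>
      have ih1 := ih (m+1) (by omega)
      have ih0 := ih m (by omega)
      have hdisj : Disjoint ((fibWords (m+1)).image (1 :: ·))
          ((fibWords m).image (2 :: ·)) := by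
        rw [Finset.disjoint_left]
        rintro w hw hw'
        simp at hw hw'
        obtain ⟨u, _, rfl⟩ := hw
        obtain ⟨v, _, hv⟩ := hw'
        simp at hv
      have h1 : ∑ w ∈ (fibWords (m+1)).image (1 :: ·), (fdim w) ^ 2
          = ∑ w ∈ fibWords (m+1), (fdim w) ^ 2 := by
        rw [Finset.sum_image (by intro x _ y _ h; simpa using h)]
        apply Finset.sum_congr rfl
        intro w _
        simp [fdim]
      have h2 : ∑ w ∈ (fibWords m).image (2 :: ·), (fdim w) ^ 2
          = (m+1)^2 * ∑ w ∈ fibWords m, (fdim w) ^ 2 := by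
        rw [Finset.sum_image (by intro x _ y _ h; simpa using h), Finset.mul_sum]
        apply Finset.sum_congr rfl
        intro w hw
        have hsum := ((mem_fibWords m w).mp hw).2
        simp [fdim, hsum]
        ring
      show ∑ w ∈ (fibWords (m+1)).image (1 :: ·) ∪ (fibWords m).image (2 :: ·),
          (fdim w) ^ 2 = Nat.factorial (m+2)
      rw [Finset.sum_union hdisj, h1, h2, ih1, ih0]
      simp [Nat.factorial]
      ring

/-- The sum of `dim(w)^2` over all Fibonacci words `w` of weight `n` equals `n!`. -/
theorem sum_fdim_sq (n : ℕ) :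
    ∑ᶠ w ∈ {w : List ℕ | (∀ a ∈ w, a = 1 ∨ a = 2) ∧ w.sum = n}, (fdim w) ^ 2
      = Nat.factorial n := by
  have hset : {w : List ℕ | (∀ a ∈ w, a = 1 ∨ a = 2) ∧ w.sum = n}
      = ↑(fibWords n) := by
    ext w
    simp [mem_fibWords]
  rw [hset, finsum_mem_coe_finset]
  exact sum_fibWords n
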